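/- Let ν₊, ν₋ be probability measures on ℝ with dν₊/dν₋(x) = e^x a.e., with CDFs G₊, G₋. Define D₋(x) = log(G₊(-x)/G₋(-x)). Then D₋(x)/(G₊(-x) - 1) → 1 as x → -∞. -/

import Mathlib

open MeasureTheory Set Filter

theorem stmt_2 (νp νm : Measure ℝ) [IsProbabilityMeasure νp] [IsProbabilityMeasure νm]
    (hac : νp ≪ νm) (hac' : νm ≪ νp)
    (hrn : ∀ᵐ x ∂νm, νp.rnDeriv νm x = ENNReal.ofReal (Real.exp x))
    (Gp Gm : ℝ → ℝ)
    (hGp : ∀ x, Gp x = (νp (Iic x)).toReal)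
    (hGm : ∀ x, Gm x = (νm (Iic x)).toReal)
    (hGm01 : ∀ x, 0 < Gm (-x) ∧ Gm (-x) < 1)
    (hGp01 : ∀ x, 0 < Gp (-x) ∧ Gp (-x) < 1) :
    Tendsto (fun x => Real.log (Gp (-x) / Gm (-x)) / (Gp (-x) - 1))
      atBot (nhds 1) := by
  -- CDFs tend to 1 at atTop
  have hGpcdf : Gp = ProbabilityTheory.cdf νp := by
    funext t; rw [hGp, ProbabilityTheory.cdf_eq_real, measureReal_def]
  have hGmcdf : Gm = ProbabilityTheory.cdf νm := by
    funext t; rw [hGm, ProbabilityTheory.cdf_eq_real, measureReal_def]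
  have hneg : Tendsto (fun x : ℝ => -x) atBot atTop := tendsto_neg_atBot_atTop
  have hGpT : Tendsto (fun x => Gp (-x)) atBot (nhds 1) := by
    rw [hGpcdf]; exact (ProbabilityTheory.tendsto_cdf_atTop νp).comp hneg
  have hGmT : Tendsto (fun x => Gm (-x)) atBot (nhds 1) := by
    rw [hGmcdf]; exact (ProbabilityTheory.tendsto_cdf_atTop νm).comp hneg
  -- tail bound
  have tail : ∀ t : ℝ, (νm (Ioi t)).toReal ≤ Real.exp (-t) * (νp (Ioi t)).toReal := by
    intro t
    have hwd : νm.withDensity (νp.rnDeriv νm) = νp := Measure.withDensity_rnDeriv_eq νp νm hac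
    have h1 : ENNReal.ofReal (Real.exp t) * νm (Ioi t) ≤ νp (Ioi t) := by
      rw [← hwd, withDensity_apply _ measurableSet_Ioi, ← setLIntegral_const]
      refine setLIntegral_mono_ae (by fun_prop) ?_
      filter_upwards [hrn] with x hx hxt
      rw [hx]
      exact ENNReal.ofReal_le_ofReal (Real.exp_le_exp.2 (le_of_lt hxt))
    have h2 : Real.exp t * (νm (Ioi t)).toReal ≤ (νp (Ioi t)).toReal := by
      have := ENNReal.toReal_mono (measure_ne_top νp _) h1
      rwa [ENNReal.toReal_mul, ENNReal.toReal_ofReal (Real.exp_pos t).le] at this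
    have het := Real.exp_pos t
    rw [Real.exp_neg, inv_mul_eq_div, le_div_iff₀ het, mul_comm]
    exact h2
  -- express 1 - G as tail
  have hcomp : ∀ (μ : Measure ℝ) [IsProbabilityMeasure μ] (t : ℝ),
      (μ (Ioi t)).toReal = 1 - (μ (Iic t)).toReal := by
    intro μ _ t
    have h := measure_add_measure_compl (μ := μ) (measurableSet_Iic (a := t))
    rw [compl_Iic, measure_univ] at h
    have h1 : (μ (Iic t)).toReal + (μ (Ioi t)).toReal = 1 := by
      rw [← ENNReal.toReal_add (measure_ne_top _ _) (measure_ne_top _ _), h, ENNReal.toReal_one]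
    linarith
  have tail' : ∀ t : ℝ, 1 - Gm t ≤ Real.exp (-t) * (1 - Gp t) := by
    intro t
    have := tail t
    rwa [hcomp νm t, hcomp νp t, ← hGm, ← hGp] at this
  -- the ratio C tends to 0
  have hC : Tendsto (fun x => (Gm (-x) - 1) / (Gp (-x) - 1)) atBot (nhds 0) := by
    have heq : ∀ x : ℝ, (Gm (-x) - 1) / (Gp (-x) - 1) = (1 - Gm (-x)) / (1 - Gp (-x)) := by
      intro x; rw [← neg_sub (Gm (-x)), ← neg_sub (Gp (-x)), neg_div_neg_eq]
    simp only [heq]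
    have hle : ∀ x : ℝ, (1 - Gm (-x)) / (1 - Gp (-x)) ≤ Real.exp x := by
      intro x
      have hp := (hGp01 x).2
      have := tail' (-x)
      rw [neg_neg] at this
      rw [div_le_iff₀ (by linarith)]
      linarith
    have h0 : ∀ x : ℝ, 0 ≤ (1 - Gm (-x)) / (1 - Gp (-x)) := by
      intro x
      have hm := (hGm01 x).2
      have hp := (hGp01 x).2
      exact div_nonneg (by linarith) (by linarith)
    exact tendsto_of_tendsto_of_tendsto_of_le_of_le tendsto_const_nhds
      Real.tendsto_exp_atBot h0 hle
  -- slope of log at 1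
  have hslope : Tendsto (fun y : ℝ => Real.log y / (y - 1)) (nhdsWithin 1 {(1:ℝ)}ᶜ) (nhds 1) := by
    have h := (Real.hasDerivAt_log one_ne_zero)
    rw [inv_one] at h
    have := hasDerivAt_iff_tendsto_slope.mp h
    refine this.congr' ?_
    filter_upwards [self_mem_nhdsWithin] with y hy
    simp [slope_def_field, Real.log_one]
  have hA : Tendsto (fun x => Real.log (Gp (-x)) / (Gp (-x) - 1)) atBot (nhds 1) := by
    refine hslope.comp (tendsto_nhdsWithin_of_tendsto_nhds_of_eventually_within _ hGpT ?_)
    exact Eventually.of_forall fun x => ne_of_lt (hGp01 x).2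
  have hB : Tendsto (fun x => Real.log (Gm (-x)) / (Gm (-x) - 1)) atBot (nhds 1) := by
    refine hslope.comp (tendsto_nhdsWithin_of_tendsto_nhds_of_eventually_within _ hGmT ?_)
    exact Eventually.of_forall fun x => ne_of_lt (hGm01 x).2
  have key : Tendsto (fun x => Real.log (Gp (-x)) / (Gp (-x) - 1)
      - (Real.log (Gm (-x)) / (Gm (-x) - 1)) * ((Gm (-x) - 1) / (Gp (-x) - 1)))
      atBot (nhds 1) := by
    have := hA.sub (hB.mul hC)
    simpa using this
  refine key.congr fun x => ?_
  have hm0 := (hGm01 x).1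
  have hm1 := (hGm01 x).2
  have hp1 := (hGp01 x).2
  have hmne : Gm (-x) - 1 ≠ 0 := by linarith
  have hpne : Gp (-x) - 1 ≠ 0 := by linarith
  have hp0 : Gp (-x) ≠ 0 := ne_of_gt (hGp01 x).1
  have hm0' : Gm (-x) ≠ 0 := ne_of_gt hm0
  rw [Real.log_div hp0 hm0']
  field_simp
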